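/- Let X be a set, let (X,*) and (X,∘) be racks on X with Lmlt(X,*) = Lmlt(X,∘) = G, and let X/G be a fixed complete set of representatives of the orbits of G on X. If L^*_x = L^∘_x for every x ∈ X/G, then (X,*) = (X,∘). In other words, a rack with left multiplication group G is determined by the data (G, (L_x : x ∈ X/G)). -/

import Mathlib

/-- A rack: a binary operation with bijective left translations satisfying the left
self-distributive law. -/
structure RackStr (X : Type*) where
  op : X → X → X
  bij : ∀ x, Function.Bijective (op x)
  self_distrib : ∀ x y z, op x (op y z) = op (op x y) (op x z)

/-- A quandle: an idempotent rack. -/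
structure QuandleStr (X : Type*) extends RackStr X where
  idem : ∀ x, op x x = x

namespace RackStr

variable {X : Type*}

/-- The left translation `L_x : y ↦ x * y`, as a permutation of `X`. -/
noncomputable def L (Q : RackStr X) (x : X) : Equiv.Perm X :=
  Equiv.ofBijective (Q.op x) (Q.bij x)

/-- The left multiplication group `Lmlt(X,*) = ⟨L_x : x ∈ X⟩ ≤ S_X`. -/
noncomputable def lmlt (Q : RackStr X) : Subgroup (Equiv.Perm X) :=
  Subgroup.closure (Set.range Q.L)

end RackStr

/-- `R` is a complete set of representatives of the orbits of `G ≤ S_X` on `X`: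
every `y ∈ X` lies in the orbit of a unique element of `R`. -/
def IsTransversal {X : Type*} (G : Subgroup (Equiv.Perm X)) (R : Set X) : Prop :=
  ∀ y : X, ∃! x : X, x ∈ R ∧ ∃ g ∈ G, g • y = x

/-- The stabilizer `G_x` of `x` in `G`, as a subgroup of `S_X`. -/
def stabIn {X : Type*} (G : Subgroup (Equiv.Perm X)) (x : X) : Subgroup (Equiv.Perm X) :=
  G ⊓ MulAction.stabilizer (Equiv.Perm X) x

/-- The centralizer `C_G(G_x)` of the stabilizer `G_x` in `G`, as a subgroup of `S_X`. -/
def cgStab {X : Type*} (G : Subgroup (Equiv.Perm X)) (x : X) : Subgroup (Equiv.Perm X) :=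
  G ⊓ Subgroup.centralizer (stabIn G x : Set (Equiv.Perm X))

/-- The center `Z(G_x)` of the stabilizer `G_x`, as a subgroup of `S_X`. -/
def zStab {X : Type*} (G : Subgroup (Equiv.Perm X)) (x : X) : Subgroup (Equiv.Perm X) :=
  stabIn G x ⊓ Subgroup.centralizer (stabIn G x : Set (Equiv.Perm X))

/-- The conjugacy class `a^G = { g⁻¹ a g : g ∈ G }` of `a` under `G`
(written in left-action convention). -/
def conjClassOf {X : Type*} (G : Subgroup (Equiv.Perm X)) (a : Equiv.Perm X) :
    Set (Equiv.Perm X) :=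
  {h | ∃ g ∈ G, h = g * a * g⁻¹}

lemma RackStr.L_apply {X : Type*} (Q : RackStr X) (x y : X) : Q.L x y = Q.op x y := rfl

lemma RackStr.L_conj {X : Type*} (Q : RackStr X) {g : Equiv.Perm X} (hg : g ∈ Q.lmlt)
    (y : X) : Q.L (g y) = g * Q.L y * g⁻¹ := by
  revert y
  refine Subgroup.closure_induction (p := fun g _ => ∀ y, Q.L (g y) = g * Q.L y * g⁻¹)
    ?_ ?_ ?_ ?_ hg
  · rintro _ ⟨x, rfl⟩ y
    ext z
    simp only [Equiv.Perm.mul_apply, RackStr.L_apply]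
    have := Q.self_distrib x y ((Q.L x)⁻¹ z)
    have hz : Q.op x ((Q.L x)⁻¹ z) = z := (Q.L x).apply_symm_apply z
    rw [hz] at this
    rw [← this]
  · intro y; simp
  · intro a b _ _ ha hb y
    have : (a * b) y = a (b y) := rfl
    rw [this, ha, hb]
    group
  · intro a _ ha y
    have := ha (a⁻¹ y)
    have h2 : a (a⁻¹ y) = y := a.apply_symm_apply y
    rw [h2] at this
    rw [this]
    group

/-- Lemma `Lm:ToEnvelope`, first part: a rack with left multiplication group
`G` is determined by its left translations at a complete set `R` of orbit representatives
of `G`. -/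
theorem rack_determined_by_envelope {X : Type*} (G : Subgroup (Equiv.Perm X)) (R : Set X)
    (hR : IsTransversal G R) (Q Q' : RackStr X) (hQ : Q.lmlt = G) (hQ' : Q'.lmlt = G)
    (h : ∀ x ∈ R, Q.op x = Q'.op x) :
    Q = Q' := by
  have hop : Q.op = Q'.op := by
    funext z
    obtain ⟨x, ⟨hxR, g, hgG, hgz⟩, -⟩ := hR z
    have hz : z = g⁻¹ x := by
      rw [← hgz]; simp
    have hL : Q.L x = Q'.L x := by
      ext w; rw [RackStr.L_apply, RackStr.L_apply, h x hxR]
    have h1 : Q.L z = g⁻¹ * Q.L x * g := by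
      rw [hz, Q.L_conj (by rw [hQ]; exact inv_mem hgG)]
      group
    have h2 : Q'.L z = g⁻¹ * Q'.L x * g := by
      rw [hz, Q'.L_conj (by rw [hQ']; exact inv_mem hgG)]
      group
    have : Q.L z = Q'.L z := by rw [h1, h2, hL]
    funext w
    rw [← RackStr.L_apply, ← RackStr.L_apply, this]
  cases Q; cases Q'; cases hop; rfl
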